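/- Lower bound witnessing failure of trace-class decay: for every integer l ≥ 1, ‖P g_l‖²_{L²(S¹)} ≥ 1/(2l). Consequently the sequence (‖P g_l‖²)_{l ≥ 1} is not summable. -/

import Mathlib

open MeasureTheory

noncomputable section

instance : Fact (0 < 2 * Real.pi) := ⟨by positivity⟩

/-- `L²(S¹)`: the circle of circumference `2π` with its normalized arc-length (Haar)
measure. Its orthonormal Fourier basis is `e_l = fourierLp 2 l`, `l ∈ ℤ`. -/
abbrev CircleL2 : Type := Lp ℂ 2 (@AddCircle.haarAddCircle (2 * Real.pi) _)

/-- The continuous real-valued Weierstrass-type function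
`W(ζ) = Σ_{n≥0} 2^{-n/4}(ζ^{2^n} + ζ^{-2^n})`, as a continuous function on the circle
(the series converges uniformly, i.e. in `C(S¹, ℂ)`). -/
def Wfun : C(AddCircle (2 * Real.pi), ℂ) :=
  ∑' n : ℕ, (((2 : ℝ) ^ (-(n : ℝ) / 4) : ℝ) : ℂ) • (fourier (2 ^ n) + fourier (-(2 ^ n : ℤ)))

/-- The element `W·e_l` of `L²(S¹)`. -/
def WeL2 (l : ℤ) : CircleL2 :=
  ContinuousMap.toLp 2 AddCircle.haarAddCircle ℂ (Wfun * fourier l)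

/-- `P` is the Szegő (Hardy) projection: the (unique) bounded operator fixing `e_n` for
`n ≥ 0` and annihilating `e_n` for `n < 0`. -/
def IsSzegoProjection (P : CircleL2 →L[ℂ] CircleL2) : Prop :=
  ∀ n : ℤ, P (fourierLp 2 n) = if 0 ≤ n then fourierLp 2 n else 0

/-- `MW` is the bounded operator of multiplication by `W`: the (unique) bounded operator
sending (the class of) a continuous function `g` to (the class of) `W·g`. -/
def IsWMultiplication (MW : CircleL2 →L[ℂ] CircleL2) : Prop :=
  ∀ g : C(AddCircle (2 * Real.pi), ℂ),
    MW (ContinuousMap.toLp 2 AddCircle.haarAddCircle ℂ g)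
      = ContinuousMap.toLp 2 AddCircle.haarAddCircle ℂ (Wfun * g)

/-- The commutator vector `g_l := (P M_W − M_W P)(W·e_l)`. -/
def commVec (P MW : CircleL2 →L[ℂ] CircleL2) (l : ℕ) : CircleL2 :=
  P (MW (WeL2 l)) - MW (P (WeL2 l))

/-! ### Auxiliary material -/

/-- Extraction of the `k`-th Fourier coefficient, as a continuous linear functional on
`C(S¹, ℂ)`. -/
def coeffCLM (k : ℤ) : C(AddCircle (2*Real.pi), ℂ) →L[ℂ] ℂ :=
  (innerSL ℂ (fourierLp 2 k)).comp (ContinuousMap.toLp (E := ℂ) 2 AddCircle.haarAddCircle ℂ)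

theorem coeffCLM_eq (g : C(AddCircle (2*Real.pi), ℂ)) (k : ℤ) :
    coeffCLM k g = fourierCoeff (⇑g) k := by
  have h1 : coeffCLM k g = @inner ℂ _ _ (fourierLp 2 k)
      (ContinuousMap.toLp (E := ℂ) 2 AddCircle.haarAddCircle ℂ g) := rfl
  rw [h1, ← coe_fourierBasis, ← HilbertBasis.repr_apply_apply, fourierBasis_repr]
  refine integral_congr_ae ?_
  filter_upwards [ContinuousMap.coeFn_toLp (p := 2) AddCircle.haarAddCircle (𝕜 := ℂ) g] with x hx
  rw [hx]

theorem fourierCoeff_fourier' (m k : ℤ) :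
    fourierCoeff (⇑(@fourier (2*Real.pi) m)) k = if k = m then 1 else 0 := by
  have h0 := orthonormal_fourier (T := 2*Real.pi)
  rw [orthonormal_iff_ite] at h0
  rw [← coeffCLM_eq]
  exact h0 k m

theorem fourierCoeff_mul_fourier (g : AddCircle (2*Real.pi) → ℂ) (l k : ℤ) :
    fourierCoeff (fun x => g x * fourier l x) k = fourierCoeff g (k - l) := by
  unfold fourierCoeff
  congr 1
  ext t
  have h : @fourier (2*Real.pi) (-(k-l)) t = fourier (-k) t * fourier l t := by
    rw [← fourier_add]; congr 1; ring
  simp only [smul_eq_mul, h]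
  ring_nf

theorem repr_toLp (g : C(AddCircle (2*Real.pi), ℂ)) (k : ℤ) :
    fourierBasis.repr (ContinuousMap.toLp (E := ℂ) 2 AddCircle.haarAddCircle ℂ g) k
      = fourierCoeff (⇑g) k := by
  rw [← coeffCLM_eq, coeffCLM]
  rw [HilbertBasis.repr_apply_apply, coe_fourierBasis]
  rfl

theorem repr_P {P : CircleL2 →L[ℂ] CircleL2} (hP : IsSzegoProjection P) (x : CircleL2) (k : ℤ) :
    fourierBasis.repr (P x) k = if 0 ≤ k then fourierBasis.repr x k else 0 := by
  have hs := fourierBasis.hasSum_repr x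
  have hs2 := hs.mapL P
  have hs3 := hs2.mapL (innerSL ℂ (fourierLp 2 k))
  have hterm : ∀ n : ℤ, (innerSL ℂ (fourierLp 2 k)) (P (fourierBasis.repr x n • fourierBasis n))
      = if n = k then (if 0 ≤ k then fourierBasis.repr x k else 0) else 0 := by
    intro n
    rw [_root_.map_smul, _root_.map_smul,
      show (fourierBasis (T := 2*Real.pi)) n = fourierLp 2 n from congrFun coe_fourierBasis n]
    simp only [hP n, innerSL_apply_apply]
    have h0 := orthonormal_fourier (T := 2*Real.pi)
    rw [orthonormal_iff_ite] at h0
    by_cases hn : 0 ≤ n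
    · rw [if_pos hn, h0 k n]
      by_cases hkn : n = k
      · subst hkn; simp [hn]
      · simp [hkn, Ne.symm hkn]
    · rw [if_neg hn]
      by_cases hkn : n = k
      · subst hkn; simp [hn]
      · simp [hkn]
  have hs4 : HasSum (fun n : ℤ => if n = k then (if 0 ≤ k then fourierBasis.repr x k else 0) else 0)
      (@inner ℂ _ _ (fourierLp 2 k) (P x)) := by
    rw [← funext hterm]
    simpa [coe_fourierBasis] using hs3
  have hgoal : (fourierBasis (T := 2*Real.pi)).repr (P x) k
      = @inner ℂ _ _ (fourierLp 2 k) (P x) := by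
    rw [HilbertBasis.repr_apply_apply,
      show (fourierBasis (T := 2*Real.pi)) k = fourierLp 2 k from congrFun coe_fourierBasis k]
  rw [hgoal]
  exact hs4.unique (hasSum_ite_eq k _)

theorem P_idem {P : CircleL2 →L[ℂ] CircleL2} (hP : IsSzegoProjection P) (x : CircleL2) :
    P (P x) = P x := by
  apply fourierBasis.repr.injective
  apply lp.ext
  funext k
  rw [repr_P hP, repr_P hP]
  split_ifs <;> rfl

/-- The coefficient sequence `2^{-n/4}`. -/
def aW (n : ℕ) : ℝ := (2 : ℝ) ^ (-(n : ℝ) / 4)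

theorem aW_pos (n : ℕ) : 0 < aW n := Real.rpow_pos_of_pos two_pos _

theorem aW_le_one (n : ℕ) : aW n ≤ 1 := by
  rw [aW, show (1:ℝ) = (2:ℝ)^(0:ℝ) by simp]
  apply Real.rpow_le_rpow_of_exponent_le one_le_two
  have : (0:ℝ) ≤ (n:ℝ) := Nat.cast_nonneg n
  linarith

theorem summable_aW : Summable aW := by
  have h : ∀ n : ℕ, aW n = ((2:ℝ) ^ (-1/4 : ℝ)) ^ n := by
    intro n
    rw [aW, ← Real.rpow_natCast ((2:ℝ) ^ (-1/4:ℝ)) n, ← Real.rpow_mul (by norm_num)]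
    congr 1; ring
  rw [show aW = fun n => ((2:ℝ) ^ (-1/4 : ℝ)) ^ n from funext h]
  apply summable_geometric_of_lt_one (Real.rpow_nonneg (by norm_num) _)
  apply Real.rpow_lt_one_of_one_lt_of_neg one_lt_two (by norm_num)

/-- The terms of the series defining `Wfun`. -/
def Wterm (n : ℕ) : C(AddCircle (2*Real.pi), ℂ) :=
  ((aW n : ℝ) : ℂ) • (fourier (2 ^ n) + fourier (-(2 ^ n : ℤ)))

theorem summable_Wterm : Summable Wterm := by
  apply Summable.of_norm
  apply Summable.of_nonneg_of_le (fun n => norm_nonneg _) (fun n => ?_) (summable_aW.mul_left 2)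
  rw [Wterm, norm_smul]
  have h1 : ‖(fourier (2 ^ n) + fourier (-(2 ^ n : ℤ)) : C(AddCircle (2*Real.pi), ℂ))‖ ≤ 2 := by
    refine (norm_add_le _ _).trans ?_
    rw [fourier_norm, fourier_norm]; norm_num
  have h2 : ‖((aW n : ℝ) : ℂ)‖ = aW n := by
    rw [Complex.norm_real, Real.norm_eq_abs, abs_of_pos (aW_pos n)]
  rw [h2]
  calc aW n * ‖_‖ ≤ aW n * 2 := mul_le_mul_of_nonneg_left h1 (aW_pos n).le
    _ = 2 * aW n := by ring

theorem Wfun_eq : Wfun = ∑' n, Wterm n := rfl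

theorem coeff_Wfun (k : ℤ) : fourierCoeff (⇑Wfun) k
    = ∑' n : ℕ, (aW n : ℂ) * ((if k = 2^n then 1 else 0) + (if k = -(2^n : ℤ) then 1 else 0)) := by
  rw [← coeffCLM_eq, Wfun_eq, (coeffCLM k).map_tsum summable_Wterm]
  congr 1
  funext n
  rw [Wterm, _root_.map_smul, map_add, coeffCLM_eq, coeffCLM_eq,
    fourierCoeff_fourier', fourierCoeff_fourier']
  rfl

theorem pow2_inj : Function.Injective (fun n : ℕ => (2:ℤ)^n) := by
  intro m n h
  simp only at h
  have h' : (2:ℕ)^m = 2^n := by exact_mod_cast h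
  exact Nat.pow_right_injective (le_refl 2) h'

theorem coeff_Wfun_pow (n : ℕ) : fourierCoeff (⇑Wfun) ((2:ℤ)^n) = (aW n : ℂ) := by
  rw [coeff_Wfun]
  rw [tsum_eq_single n]
  · have h1 : ((2:ℤ)^n = 2^n) := rfl
    have h2 : ¬((2:ℤ)^n = -(2^n : ℤ)) := by
      have := pow_pos (by norm_num : (0:ℤ) < 2) n
      omega
    rw [if_pos h1, if_neg h2]
    ring
  · intro m hm
    have h1 : ¬((2:ℤ)^n = 2^m) := fun h => hm (pow2_inj h.symm)
    have h2 : ¬((2:ℤ)^n = -(2^m : ℤ)) := by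
      have ha := pow_pos (by norm_num : (0:ℤ) < 2) n
      have hb := pow_pos (by norm_num : (0:ℤ) < 2) m
      omega
    rw [if_neg h1, if_neg h2]
    ring

/-- The terms of the "negative-frequency tail" of `W·e_l`. -/
def Hterm (l : ℕ) (n : ℕ) : C(AddCircle (2*Real.pi), ℂ) :=
  if ((l:ℤ) < 2^n) then ((aW n : ℝ) : ℂ) • fourier ((l:ℤ) - 2^n) else 0

theorem summable_Hterm (l : ℕ) : Summable (Hterm l) := by
  apply Summable.of_norm
  apply Summable.of_nonneg_of_le (fun n => norm_nonneg _) (fun n => ?_) summable_aW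
  rw [Hterm]
  split_ifs
  · rw [norm_smul, fourier_norm, mul_one, Complex.norm_real, Real.norm_eq_abs,
      abs_of_pos (aW_pos n)]
  · simpa using (aW_pos n).le

/-- The negative-frequency tail of `W·e_l`. -/
def Hfun (l : ℕ) : C(AddCircle (2*Real.pi), ℂ) := ∑' n, Hterm l n

theorem coeff_Hfun (l : ℕ) (k : ℤ) : fourierCoeff (⇑(Hfun l)) k
    = ∑' n : ℕ, (if ((l:ℤ) < 2^n) then (aW n : ℂ) * (if k = (l:ℤ) - 2^n then 1 else 0) else 0) := by
  rw [← coeffCLM_eq, Hfun, (coeffCLM k).map_tsum (summable_Hterm l)]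
  congr 1
  funext n
  by_cases hc : ((l:ℤ) < 2^n)
  · rw [Hterm, if_pos hc, if_pos hc, _root_.map_smul, coeffCLM_eq, fourierCoeff_fourier',
      smul_eq_mul]
  · rw [Hterm, if_neg hc, if_neg hc, map_zero]

theorem keyA {P : CircleL2 →L[ℂ] CircleL2} (hP : IsSzegoProjection P) (l : ℕ) :
    P (WeL2 l) = ContinuousMap.toLp (E := ℂ) 2 AddCircle.haarAddCircle ℂ
      (Wfun * fourier l - Hfun l) := by
  apply fourierBasis.repr.injective
  apply lp.ext
  funext k
  rw [repr_P hP, WeL2]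
  have hRHS : fourierBasis.repr (ContinuousMap.toLp (E := ℂ) 2 AddCircle.haarAddCircle ℂ
      (Wfun * fourier (l:ℤ) - Hfun l)) k
      = fourierCoeff (⇑(Wfun * fourier (l:ℤ) : C(AddCircle (2*Real.pi), ℂ))) k
        - fourierCoeff (⇑(Hfun l)) k := by
    rw [map_sub, map_sub, lp.coeFn_sub, Pi.sub_apply, repr_toLp, repr_toLp]
  rw [hRHS, repr_toLp]
  by_cases hk : 0 ≤ k
  · rw [if_pos hk]
    have hH : fourierCoeff (⇑(Hfun l)) k = 0 := by
      rw [coeff_Hfun]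
      convert tsum_zero with n
      split_ifs with h1 h2
      · exfalso
        have := pow_pos (by norm_num : (0:ℤ) < 2) n
        omega
      · ring
      · rfl
    rw [hH]
    ring
  · rw [if_neg hk]
    have hW : fourierCoeff (⇑(Wfun * fourier (l:ℤ) : C(AddCircle (2*Real.pi), ℂ))) k
        = fourierCoeff (⇑(Hfun l)) k := by
      have hcoe : (⇑(Wfun * fourier (l:ℤ) : C(AddCircle (2*Real.pi), ℂ)))
          = fun x => Wfun x * fourier (l:ℤ) x := rfl
      rw [hcoe, fourierCoeff_mul_fourier, coeff_Wfun, coeff_Hfun]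
      congr 1
      funext n
      have hpos := pow_pos (by norm_num : (0:ℤ) < 2) n
      have h1 : ¬(k - (l:ℤ) = 2^n) := by omega
      rw [if_neg h1]
      by_cases h2 : (l:ℤ) < 2^n
      · rw [if_pos h2]
        have h3 : (k - (l:ℤ) = -(2^n : ℤ)) ↔ (k = (l:ℤ) - 2^n) := by omega
        by_cases h4 : k = (l:ℤ) - 2^n
        · rw [if_pos (h3.mpr h4), if_pos h4]; ring
        · rw [if_neg (fun h => h4 (h3.mp h)), if_neg h4]; ring
      · rw [if_neg h2]
        have h4 : ¬(k - (l:ℤ) = -(2^n : ℤ)) := by omega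
        rw [if_neg h4]
        ring
    rw [hW]
    ring

theorem keyB {P MW : CircleL2 →L[ℂ] CircleL2} (hP : IsSzegoProjection P)
    (hMW : IsWMultiplication MW) (l : ℕ) :
    P (commVec P MW l) = P (ContinuousMap.toLp (E := ℂ) 2 AddCircle.haarAddCircle ℂ
      (Wfun * Hfun l)) := by
  have h1 : MW (P (WeL2 l)) = ContinuousMap.toLp (E := ℂ) 2 AddCircle.haarAddCircle ℂ
      (Wfun * (Wfun * fourier l)) - ContinuousMap.toLp (E := ℂ) 2 AddCircle.haarAddCircle ℂ
      (Wfun * Hfun l) := by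
    rw [keyA hP, hMW, mul_sub, map_sub]
  have h2 : MW (WeL2 l) = ContinuousMap.toLp (E := ℂ) 2 AddCircle.haarAddCircle ℂ
      (Wfun * (Wfun * fourier l)) := hMW _
  rw [commVec, map_sub, h1, h2, map_sub, P_idem hP]
  abel

theorem cl_summable (l : ℕ) :
    Summable (fun n : ℕ => if ((l:ℤ) < 2^n) then aW n * aW n else 0) := by
  apply Summable.of_nonneg_of_le (fun n => ?_) (fun n => ?_) summable_aW
  · split_ifs
    · exact mul_nonneg (aW_pos _).le (aW_pos _).le
    · exact le_refl 0
  · split_ifs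
    · calc aW n * aW n ≤ aW n * 1 := mul_le_mul_of_nonneg_left (aW_le_one n) (aW_pos n).le
        _ = aW n := mul_one _
    · exact (aW_pos n).le

theorem key_coeff {P MW : CircleL2 →L[ℂ] CircleL2} (hP : IsSzegoProjection P)
    (hMW : IsWMultiplication MW) (l : ℕ) :
    fourierBasis.repr (P (commVec P MW l)) (l : ℤ)
      = ((∑' n : ℕ, if ((l:ℤ) < 2^n) then aW n * aW n else 0 : ℝ) : ℂ) := by
  rw [keyB hP hMW, repr_P hP, if_pos (Int.natCast_nonneg l), repr_toLp]
  -- the continuous linear functional g ↦ fourierCoeff (W * g) l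
  set Ψ : C(AddCircle (2*Real.pi), ℂ) →L[ℂ] ℂ :=
    (innerSL ℂ (fourierLp 2 (l : ℤ))).comp
      (MW.comp (ContinuousMap.toLp (E := ℂ) 2 AddCircle.haarAddCircle ℂ)) with hΨ
  have hΨeq : ∀ g : C(AddCircle (2*Real.pi), ℂ), Ψ g = fourierCoeff (⇑(Wfun * g)) (l : ℤ) := by
    intro g
    have : Ψ g = @inner ℂ _ _ (fourierLp 2 (l:ℤ))
        (MW (ContinuousMap.toLp (E := ℂ) 2 AddCircle.haarAddCircle ℂ g)) := rfl
    rw [this, hMW, ← repr_toLp, HilbertBasis.repr_apply_apply,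
      show (fourierBasis (T := 2*Real.pi)) (l:ℤ) = fourierLp 2 (l:ℤ) from
        congrFun coe_fourierBasis (l:ℤ)]
  rw [← hΨeq, Hfun, Ψ.map_tsum (summable_Hterm l)]
  have hterm : ∀ n : ℕ, Ψ (Hterm l n)
      = ((if ((l:ℤ) < 2^n) then aW n * aW n else 0 : ℝ) : ℂ) := by
    intro n
    rw [Hterm]
    split_ifs with h
    · rw [_root_.map_smul, hΨeq]
      have : (⇑(Wfun * fourier ((l:ℤ) - 2^n) : C(AddCircle (2*Real.pi), ℂ)))
          = fun x => Wfun x * fourier ((l:ℤ) - 2^n) x := rfl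
      rw [this, fourierCoeff_mul_fourier,
        show (l:ℤ) - ((l:ℤ) - 2^n) = (2:ℤ)^n by ring, coeff_Wfun_pow]
      rw [smul_eq_mul]
      push_cast
      ring
    · rw [map_zero]
      norm_num
  rw [funext hterm]
  have hmt := Complex.ofRealCLM.map_tsum (cl_summable l)
  simpa using hmt.symm

theorem norm_sq_lower {P MW : CircleL2 →L[ℂ] CircleL2} (hP : IsSzegoProjection P)
    (hMW : IsWMultiplication MW) (l : ℕ) (hl : 1 ≤ l) :
    1 / (2 * (l : ℝ)) ≤ ‖P (commVec P MW l)‖ ^ 2 := by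
  set n₀ : ℕ := Nat.log 2 l + 1 with hn₀
  set cl : ℝ := ∑' n : ℕ, if ((l:ℤ) < 2^n) then aW n * aW n else 0 with hcl
  -- the coefficient bound
  have hcond : (l:ℤ) < 2^n₀ := by
    have := Nat.lt_pow_succ_log_self (by norm_num : 1 < 2) l
    exact_mod_cast this
  have hterm_le : aW n₀ * aW n₀ ≤ cl := by
    have := Summable.le_tsum (cl_summable l) n₀ (fun m _ => by
      split_ifs
      · exact mul_nonneg (aW_pos _).le (aW_pos _).le
      · exact le_refl 0)
    rwa [if_pos hcond] at this
  have hpow_le : (2:ℝ)^n₀ ≤ 2 * l := by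
    have h1 : 2^(Nat.log 2 l) ≤ l := Nat.pow_log_le_self 2 (by omega)
    have h2 : (2:ℕ)^n₀ = 2 * 2^(Nat.log 2 l) := by rw [hn₀, pow_succ]; ring
    have : (2:ℕ)^n₀ ≤ 2 * l := by omega
    exact_mod_cast this
  have haWsq : aW n₀ * aW n₀ = (2:ℝ) ^ (-(n₀:ℝ) / 2) := by
    rw [aW, ← Real.rpow_add two_pos]
    congr 1; ring
  have hbb : (aW n₀ * aW n₀) * (aW n₀ * aW n₀) = (2:ℝ) ^ (-(n₀:ℝ)) := by
    rw [haWsq, ← Real.rpow_add two_pos]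
    congr 1; ring
  have hl0 : (0:ℝ) < l := by exact_mod_cast hl
  have hfin : 1 / (2 * (l:ℝ)) ≤ (aW n₀ * aW n₀) * (aW n₀ * aW n₀) := by
    rw [hbb, Real.rpow_neg (by norm_num), Real.rpow_natCast, one_div,
      inv_le_inv₀ (by linarith) (by positivity)]
    exact hpow_le
  -- the norm bound
  have hrepr := key_coeff hP hMW l
  have hnorm : cl ≤ ‖P (commVec P MW l)‖ := by
    have h1 : ‖fourierBasis.repr (P (commVec P MW l)) (l:ℤ)‖
        ≤ ‖fourierBasis.repr (P (commVec P MW l))‖ :=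
      lp.norm_apply_le_norm (by norm_num) _ _
    rw [hrepr] at h1
    rw [Complex.norm_real, Real.norm_eq_abs] at h1
    have h2 : |cl| = cl := abs_of_nonneg (by
      apply tsum_nonneg
      intro n
      split_ifs
      · exact mul_nonneg (aW_pos _).le (aW_pos _).le
      · exact le_refl 0)
    rw [h2] at h1
    rwa [LinearIsometryEquiv.norm_map] at h1
  have hble : aW n₀ * aW n₀ ≤ ‖P (commVec P MW l)‖ := hterm_le.trans hnorm
  have hbpos : (0:ℝ) ≤ aW n₀ * aW n₀ := mul_nonneg (aW_pos _).le (aW_pos _).le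
  calc 1 / (2 * (l:ℝ)) ≤ (aW n₀ * aW n₀) * (aW n₀ * aW n₀) := hfin
    _ ≤ ‖P (commVec P MW l)‖ * ‖P (commVec P MW l)‖ :=
        mul_le_mul hble hble hbpos (norm_nonneg _)
    _ = ‖P (commVec P MW l)‖ ^ 2 := (sq _).symm

/-- Lower bound witnessing failure of trace-class decay: for every integer
`l ≥ 1`, `‖P g_l‖² ≥ 1/(2l)`. Consequently the sequence `(‖P g_l‖²)_{l ≥ 1}` is not
summable. -/
theorem statement18 (P MW : CircleL2 →L[ℂ] CircleL2)
    (hP : IsSzegoProjection P) (hMW : IsWMultiplication MW) :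
    (∀ l : ℕ, 1 ≤ l → 1 / (2 * (l : ℝ)) ≤ ‖P (commVec P MW l)‖ ^ 2) ∧
    ¬ Summable (fun l : ℕ => ‖P (commVec P MW (l + 1))‖ ^ 2) := by
  constructor
  · exact fun l hl => norm_sq_lower hP hMW l hl
  · intro hsum
    have h1 : Summable (fun l : ℕ => 1 / (2 * ((l:ℝ) + 1))) := by
      apply Summable.of_nonneg_of_le (fun l => by positivity) (fun l => ?_) hsum
      have := norm_sq_lower hP hMW (l + 1) (by omega)
      simpa using this
    have h2 : Summable (fun l : ℕ => 1 / (((l:ℝ) + 1))) := by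
      have := h1.mul_left 2
      convert this using 2 with l
      · rfl
      · field_simp
    have h3 : Summable (fun l : ℕ => 1 / ((l:ℝ))) := by
      rw [← summable_nat_add_iff 1]
      convert h2 using 2 with l
      · rfl
      · push_cast
        ring
    exact Real.not_summable_one_div_natCast h3
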